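/- Let G and N be groups and Φ : G →* MulAut N a group homomorphism. Let F_Φ : SingleObj G ⥤ Cat be the functor sending the unique object of SingleObj G to Cat.of (SingleObj N) and sending each endomorphism g : G to the endofunctor of SingleObj N induced by the monoid homomorphism underlying Φ g. Then the Grothendieck construction Grothendieck F_Φ is equivalent, as a category, to the one-object category SingleObj (N ⋊[Φ] G) of the semidirect product N ⋊[Φ] G. -/

import Mathlib

open CategoryTheory

/-- The functor `SingleObj G ⥤ Cat` sending the unique object to `Cat.of (SingleObj N)`
and each `g : G` to the endofunctor of `SingleObj N` induced by the monoid homomorphism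
underlying `Φ g`. -/
def semidirectActionFunctor {G N : Type*} [Group G] [Group N] (Φ : G →* MulAut N) :
    SingleObj G ⥤ Cat where
  obj _ := Cat.of (SingleObj N)
  map g := (SingleObj.mapHom N N (Φ g).toMonoidHom).toCatHom
  map_id _ := by
    show (SingleObj.mapHom N N (Φ 1).toMonoidHom).toCatHom = _
    rw [map_one]
    rfl
  map_comp f g := by
    show (SingleObj.mapHom N N (Φ (g * f)).toMonoidHom).toCatHom = _
    rw [map_mul]
    rfl

private lemma eqToHom_singleObj {N : Type*} [Group N] {a b : SingleObj N} (h : a = b) :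
    eqToHom h = (1 : N) := by
  cases h; rfl

private lemma eqToHom_comp_singleObj {N : Type*} [Group N] {a b c : SingleObj N} (h : a = b)
    (k : b ⟶ c) : eqToHom h ≫ k = k := by cases h; simp

/-- The functor from the Grothendieck construction to the one-object category of the
semidirect product. -/
private def toSemi {G N : Type*} [Group G] [Group N] (Φ : G →* MulAut N) :
    Grothendieck (semidirectActionFunctor Φ) ⥤ SingleObj (N ⋊[Φ] G) where
  obj _ := SingleObj.star _
  map f := ⟨f.fiber, f.base⟩
  map_id X := by
    apply SemidirectProduct.ext
    · show (Grothendieck.id X).fiber = (1 : N)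
      unfold Grothendieck.id
      dsimp only
      exact eqToHom_singleObj (N := N) _
    · rfl
  map_comp f g := by
    apply SemidirectProduct.ext
    · show (Grothendieck.comp f g).fiber = _
      unfold Grothendieck.comp
      dsimp only
      exact (eqToHom_comp_singleObj (N := N) _ _ :)
    · rfl

theorem grothendieck_equiv_singleObj_semidirectProduct
    {G N : Type*} [Group G] [Group N] (Φ : G →* MulAut N) :
    Nonempty (Grothendieck (semidirectActionFunctor Φ) ≌ SingleObj (N ⋊[Φ] G)) := by
  have : (toSemi Φ).Faithful := ⟨fun {X Y f g} h => by
    apply Grothendieck.ext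
    · erw [eqToHom_comp_singleObj]
      exact congrArg SemidirectProduct.left h
    · exact congrArg SemidirectProduct.right h⟩
  have : (toSemi Φ).Full := ⟨fun {X Y} p => ⟨⟨p.right, p.left⟩, rfl⟩⟩
  have : (toSemi Φ).EssSurj :=
    ⟨fun y => ⟨⟨SingleObj.star G, SingleObj.star N⟩, ⟨eqToIso (by cases y; rfl)⟩⟩⟩
  have : (toSemi Φ).IsEquivalence := {}
  exact ⟨(toSemi Φ).asEquivalence⟩
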